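/- Let Γ be a discrete subgroup of ℝ^{d+e}, and suppose there exists γ ∈ Γ \ {0} with π₁(γ) = 0. Let U ⊆ ℝ^e be the orthogonal complement of π₂(γ), ρ : ℝ^e → U the orthogonal projection, and Γ' = (id × ρ)(Γ). Then Γ' is a discrete subgroup of ℝ^d × U. -/

import Mathlib

set_option maxHeartbeats 1000000

/-- A bounded, uniformly separated set in a proper metric space is finite. -/
lemma separated_bounded_finite {X : Type*} [MetricSpace X] [ProperSpace X]
    {s : Set X} {x₀ : X} {R ε : ℝ} (hb : s ⊆ Metric.closedBall x₀ R) (hε : 0 < ε)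
    (hsep : ∀ x ∈ s, ∀ y ∈ s, x ≠ y → ε ≤ dist x y) : s.Finite := by
  by_contra h
  obtain ⟨x, -, hx⟩ := Set.Infinite.exists_accPt_of_subset_isCompact
    h (isCompact_closedBall x₀ R) hb
  rw [accPt_iff_nhds] at hx
  obtain ⟨y, ⟨hy1, hy2⟩, hyx⟩ := hx (Metric.ball x (ε/2)) (Metric.ball_mem_nhds _ (by positivity))
  have hdyx : 0 < dist y x := dist_pos.mpr hyx
  obtain ⟨z, ⟨hz1, hz2⟩, hzx⟩ := hx (Metric.ball x (min (ε/2) (dist y x)))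
    (Metric.ball_mem_nhds _ (lt_min (by positivity) hdyx))
  rw [Metric.mem_ball, lt_min_iff] at hz1
  have hzy : z ≠ y := by
    intro hzy; subst hzy; exact absurd hz1.2 (lt_irrefl _)
  have h1 := hsep y hy2 z hz2 (Ne.symm hzy)
  have h2 : dist y z ≤ dist y x + dist x z := dist_triangle _ _ _
  rw [Metric.mem_ball] at hy1
  rw [dist_comm x z] at h2
  linarith [hz1.1]

/-- If `Γ ≤ ℝ^d × ℝ^e` is a discrete subgroup and `γ ∈ Γ \ {0}` has `π₁(γ) = 0`,
then the image `Γ' = (id × ρ)(Γ)`, where `ρ` is the orthogonal projection of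
`ℝ^e` onto `U = (π₂ γ)^⊥`, is a discrete subgroup of `ℝ^d × U`. -/
theorem projected_group_discrete (d e : ℕ)
    (Γ : AddSubgroup (EuclideanSpace ℝ (Fin d) × EuclideanSpace ℝ (Fin e)))
    (hdisc : ∃ ε > 0, ∀ x ∈ Γ, x ≠ 0 → ε ≤ ‖x‖)
    (γ : EuclideanSpace ℝ (Fin d) × EuclideanSpace ℝ (Fin e))
    (hγ : γ ∈ Γ) (hγ0 : γ ≠ 0) (hγ1 : γ.1 = 0)
    (Γ' : Set (EuclideanSpace ℝ (Fin d) × ((ℝ ∙ γ.2)ᗮ : Submodule ℝ (EuclideanSpace ℝ (Fin e)))))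
    (hΓ' : Γ' = (fun p : EuclideanSpace ℝ (Fin d) × EuclideanSpace ℝ (Fin e) =>
      (p.1, Submodule.orthogonalProjectionOnto ((ℝ ∙ γ.2)ᗮ) p.2)) '' Γ) :
    ((0 ∈ Γ') ∧ ∀ x ∈ Γ', ∀ y ∈ Γ', x - y ∈ Γ') ∧
      ∃ ε > 0, ∀ x ∈ Γ', x ≠ 0 → ε ≤ ‖x‖ := by
  subst hΓ'
  set U : Submodule ℝ (EuclideanSpace ℝ (Fin e)) := (ℝ ∙ γ.2)ᗮ with hU
  set f : EuclideanSpace ℝ (Fin d) × EuclideanSpace ℝ (Fin e) →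
      EuclideanSpace ℝ (Fin d) × U :=
    fun p => (p.1, Submodule.orthogonalProjectionOnto U p.2) with hf
  have hfsub : ∀ p q, f (p - q) = f p - f q := by
    intro p q
    simp [hf, Prod.ext_iff, map_sub]
  have hγ2 : γ.2 ≠ 0 := by
    intro h
    exact hγ0 (Prod.ext_iff.mpr ⟨by simpa using hγ1, by simpa using h⟩)
  have hγmem : γ.2 ∈ Uᗮ :=
    Submodule.le_orthogonal_orthogonal _ (Submodule.mem_span_singleton_self _)
  have hfγ : f γ = 0 := by
    have : Submodule.orthogonalProjectionOnto U γ.2 = 0 :=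
      Submodule.orthogonalProjectionOnto_apply_of_mem_orthogonal hγmem
    simp [hf, Prod.ext_iff, hγ1, this]
  constructor
  · constructor
    · exact ⟨0, Γ.zero_mem, by simp [hf, Prod.ext_iff]⟩
    · rintro x ⟨p, hp, rfl⟩ y ⟨q, hq, rfl⟩
      exact ⟨p - q, Γ.sub_mem hp hq, hfsub p q⟩
  -- discreteness
  obtain ⟨ε₀, hε₀, hsep₀⟩ := hdisc
  set c : ℝ := ‖γ.2‖ / 2 with hc
  set R : ℝ := Real.sqrt (1 + c ^ 2) with hR
  have hR1 : (1 : ℝ) ≤ R := by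
    rw [hR]
    have h' := Real.sqrt_le_sqrt (show (1:ℝ) ≤ 1 + c^2 by nlinarith [sq_nonneg c])
    simpa using h'
  -- key: any x ∈ Γ' with ‖x‖ ≤ 1 has a lift in Γ of norm ≤ R
  have key : ∀ p ∈ Γ, ‖f p‖ ≤ 1 → ∃ q ∈ Γ, f q = f p ∧ ‖q‖ ≤ R := by
    intro p hp hnp
    set t : ℝ := (inner ℝ γ.2 p.2 : ℝ) / ‖γ.2‖ ^ 2 with ht
    set n : ℤ := round t with hn
    refine ⟨p - n • γ, Γ.sub_mem hp (Γ.zsmul_mem hγ n), ?_, ?_⟩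
    · rw [hfsub]
      have : f (n • γ) = 0 := by
        have : f (n • γ) = n • f γ := by
          simp [hf, Prod.ext_iff, map_zsmul]
        rw [this, hfγ, smul_zero]
      rw [this, sub_zero]
    · -- norm bound
      have hq1 : (p - n • γ).1 = p.1 := by simp [hγ1]
      have hdecomp : p.2 = (t • γ.2 : EuclideanSpace ℝ (Fin e)) +
          (Submodule.orthogonalProjectionOnto U p.2 : EuclideanSpace ℝ (Fin e)) := by
        have h1 := (Submodule.starProjection_add_starProjection_orthogonal (K := ℝ ∙ γ.2) p.2).symm
        simp only [Submodule.starProjection_apply] at h1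
        have h2 : ((Submodule.orthogonalProjectionOnto (ℝ ∙ γ.2) p.2 : EuclideanSpace ℝ (Fin e))) = t • γ.2 := by
          rw [← Submodule.starProjection_apply, Submodule.starProjection_singleton]
          norm_cast
        rw [h2] at h1
        exact h1
      have hq2 : (p - n • γ).2 =
          (Submodule.orthogonalProjectionOnto U p.2 : EuclideanSpace ℝ (Fin e)) + (t - n) • γ.2 := by
        have : (p - n • γ).2 = p.2 - (n : ℝ) • γ.2 := by
          simp [Int.cast_smul_eq_zsmul ℝ]
        rw [this]
        nth_rewrite 1 [hdecomp]
        rw [sub_smul]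
        abel
      have hinner : (inner ℝ (Submodule.orthogonalProjectionOnto U p.2 : EuclideanSpace ℝ (Fin e))
          ((t - n) • γ.2) : ℝ) = 0 := by
        rw [real_inner_smul_right]
        rw [Submodule.inner_right_of_mem_orthogonal (Submodule.coe_mem _) hγmem, mul_zero]
      have hnormsq : ‖(p - n • γ).2‖ ^ 2 =
          ‖(Submodule.orthogonalProjectionOnto U p.2 : EuclideanSpace ℝ (Fin e))‖ ^ 2 +
          ‖(t - n) • γ.2‖ ^ 2 := by
        rw [hq2, pow_two, pow_two, pow_two]
        exact norm_add_sq_eq_norm_sq_add_norm_sq_real hinner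
      have habs : |t - (n : ℝ)| ≤ 1 / 2 := abs_sub_round t
      have hproj_le : ‖(Submodule.orthogonalProjectionOnto U p.2 : EuclideanSpace ℝ (Fin e))‖ ≤ ‖f p‖ := by
        have : ‖(Submodule.orthogonalProjectionOnto U p.2 : EuclideanSpace ℝ (Fin e))‖ = ‖(f p).2‖ := rfl
        rw [this]
        exact le_trans (le_max_right _ _) (le_of_eq (Prod.norm_def _).symm)
      have hsmul : ‖(t - n) • γ.2‖ ≤ c := by
        rw [norm_smul, Real.norm_eq_abs, hc]
        calc |t - (n:ℝ)| * ‖γ.2‖ ≤ (1/2) * ‖γ.2‖ :=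
              mul_le_mul_of_nonneg_right habs (norm_nonneg _)
          _ = ‖γ.2‖ / 2 := by ring
      have h2 : ‖(p - n • γ).2‖ ^ 2 ≤ 1 + c ^ 2 := by
        rw [hnormsq]
        have h3 : ‖(Submodule.orthogonalProjectionOnto U p.2 : EuclideanSpace ℝ (Fin e))‖ ^ 2 ≤ 1 := by
          nlinarith [norm_nonneg (Submodule.orthogonalProjectionOnto U p.2 : EuclideanSpace ℝ (Fin e)),
            norm_nonneg (f p), hproj_le, hnp]
        nlinarith [norm_nonneg ((t - n) • γ.2), norm_nonneg (γ.2)]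
      have h2' : ‖(p - n • γ).2‖ ≤ R := by
        rw [hR, Real.le_sqrt (norm_nonneg _) (by positivity)]
        exact h2
      have h1' : ‖(p - n • γ).1‖ ≤ R := by
        rw [hq1]
        have : ‖p.1‖ = ‖(f p).1‖ := rfl
        rw [this]
        exact le_trans (le_trans (le_max_left _ _) (le_of_eq (Prod.norm_def _).symm))
          (le_trans hnp hR1)
      rw [Prod.norm_def]
      exact max_le h1' h2'
  -- the finite set of small lifts
  set S : Set (EuclideanSpace ℝ (Fin d) × EuclideanSpace ℝ (Fin e)) :=
    {p | p ∈ Γ ∧ ‖p‖ ≤ R} with hS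
  have hSfin : S.Finite := by
    apply separated_bounded_finite (x₀ := 0) (R := R) (ε := ε₀) _ hε₀
    · intro x hx y hy hxy
      rw [dist_eq_norm]
      exact hsep₀ _ (Γ.sub_mem hx.1 hy.1) (sub_ne_zero.mpr hxy)
    · intro p hp
      rw [Metric.mem_closedBall, dist_zero_right]
      exact hp.2
  set T : Set ℝ := insert 1 ((fun p => ‖f p‖) '' {p ∈ S | f p ≠ 0}) with hT
  have hTfin : T.Finite := (hSfin.sep _).image _ |>.insert 1
  have hTne : (hTfin.toFinset).Nonempty := ⟨1, by simp [hT]⟩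
  set ε : ℝ := hTfin.toFinset.min' hTne with hε
  have hεpos : 0 < ε := by
    have hmem := hTfin.toFinset.min'_mem hTne
    rw [← hε] at hmem
    rw [Set.Finite.mem_toFinset, hT] at hmem
    rcases hmem with h1 | ⟨p, hp, hfp⟩
    · rw [h1]; norm_num
    · rw [← hfp]; exact norm_pos_iff.mpr hp.2
  refine ⟨ε, hεpos, ?_⟩
  rintro x ⟨p, hp, rfl⟩ hx0
  by_cases h1 : 1 ≤ ‖f p‖
  · have : ε ≤ 1 := Finset.min'_le _ _ (by simp [hT])
    linarith
  · push_neg at h1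
    obtain ⟨q, hq, hfq, hqR⟩ := key p hp (le_of_lt h1)
    have hq0 : f q ≠ 0 := hfq ▸ hx0
    have : ‖f q‖ ∈ T := by
      rw [hT]
      exact Set.mem_insert_of_mem _ ⟨q, ⟨⟨hq, hqR⟩, hq0⟩, rfl⟩
    have := Finset.min'_le hTfin.toFinset _ (hTfin.mem_toFinset.mpr this)
    rw [← hε, hfq] at this
    exact this
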